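/- If n > 0 is neither a power of 2 nor an odd prime, then n is not complete: there exist pairs (1, n−1) and (p, n−p), where p is an odd prime properly dividing n, lying in distinct orbits. -/

import Mathlib

/-- One application of an alternative-law map on pairs of positive integers:
`α(r,s) = (2r, s-r)` for `s > r`, `β(r,s) = (r-s, 2s)` for `r > s`,
`γ(r,s) = (r/2, s + r/2)` for `r` even, `δ(r,s) = (r + s/2, s/2)` for `s` even. -/
def AltStep (p q : ℕ × ℕ) : Prop :=
  (p.1 < p.2 ∧ q = (2 * p.1, p.2 - p.1)) ∨
  (p.2 < p.1 ∧ q = (p.1 - p.2, 2 * p.2)) ∨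
  (∃ t, p.1 = 2 * t ∧ q = (t, p.2 + t)) ∨
  (∃ t, p.2 = 2 * t ∧ q = (p.1 + t, t))

/-- `q` belongs to the orbit `O(p)`. -/
def InOrbit (p q : ℕ × ℕ) : Prop := Relation.ReflTransGen AltStep p q

lemma altstep_back {p : ℕ} (hp : p.Prime) (hodd : Odd p) {x y : ℕ × ℕ}
    (h : AltStep x y) (hy : p ∣ y.1 ∧ p ∣ y.2) : p ∣ x.1 ∧ p ∣ x.2 := by
  have hc2 : p.Coprime 2 := Nat.coprime_two_right.mpr hodd
  rcases h with ⟨hlt, rfl⟩ | ⟨hlt, rfl⟩ | ⟨t, ht, rfl⟩ | ⟨t, ht, rfl⟩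
  · obtain ⟨h1, h2⟩ := hy
    simp only at h1 h2
    have hx1 : p ∣ x.1 := (Nat.Coprime.dvd_of_dvd_mul_left hc2 h1)
    refine ⟨hx1, ?_⟩
    have := Nat.dvd_add h2 hx1
    rwa [Nat.sub_add_cancel hlt.le] at this
  · obtain ⟨h1, h2⟩ := hy
    simp only at h1 h2
    have hx2 : p ∣ x.2 := (Nat.Coprime.dvd_of_dvd_mul_left hc2 h2)
    refine ⟨?_, hx2⟩
    have := Nat.dvd_add h1 hx2
    rwa [Nat.sub_add_cancel hlt.le] at this
  · obtain ⟨h1, h2⟩ := hy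
    simp only at h1 h2
    refine ⟨ht ▸ Dvd.dvd.mul_left h1 2, ?_⟩
    have := Nat.dvd_sub h2 h1
    simpa using this
  · obtain ⟨h1, h2⟩ := hy
    simp only at h1 h2
    refine ⟨?_, ht ▸ Dvd.dvd.mul_left h2 2⟩
    have := Nat.dvd_sub h1 h2
    simpa using this

theorem not_complete_of_not_prime_power (n : ℕ) (hn : 0 < n)
    (h2 : ¬ ∃ m : ℕ, n = 2 ^ m) (hp : ¬ (n.Prime ∧ Odd n)) :
    ∃ p : ℕ, p.Prime ∧ Odd p ∧ p ∣ n ∧ p < n ∧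
      {q : ℕ × ℕ | InOrbit (1, n - 1) q} ≠ {q : ℕ × ℕ | InOrbit (p, n - p) q} := by
  -- find an odd prime divisor of n
  set m := n / 2 ^ (n.factorization 2) with hm
  have hmdvd : m ∣ n := Nat.ordCompl_dvd n 2
  have hmne : m ≠ 1 := by
    intro h1
    apply h2
    refine ⟨n.factorization 2, ?_⟩
    have := Nat.ordProj_mul_ordCompl_eq_self n 2
    rw [← hm] at this
    rw [h1, mul_one] at this
    exact this.symm
  have hmpos : 0 < m := Nat.ordCompl_pos 2 hn.ne'
  set p := m.minFac with hpdef
  have hpp : p.Prime := Nat.minFac_prime hmne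
  have hpm : p ∣ m := Nat.minFac_dvd m
  have hpn : p ∣ n := hpm.trans hmdvd
  have hpodd : Odd p := by
    rcases hpp.eq_two_or_odd' with h | h
    · exfalso
      have : ¬ 2 ∣ m := Nat.not_dvd_ordCompl Nat.prime_two hn.ne'
      exact this (h ▸ hpm)
    · exact h
  have hplt : p < n := by
    rcases lt_or_eq_of_le (Nat.le_of_dvd hn hpn) with h | h
    · exact h
    · exact absurd ⟨h ▸ hpp, h ▸ hpodd⟩ hp
  refine ⟨p, hpp, hpodd, hpn, hplt, ?_⟩
  intro hset
  have hmem : InOrbit (1, n - 1) (p, n - p) := by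
    have : (p, n - p) ∈ {q : ℕ × ℕ | InOrbit (p, n - p) q} := Relation.ReflTransGen.refl
    rw [← hset] at this
    exact this
  -- invariant: p divides both coordinates propagates backward
  have key : ∀ q : ℕ × ℕ, InOrbit (1, n - 1) q → (p ∣ q.1 ∧ p ∣ q.2) → False := by
    intro q hq
    induction hq with
    | refl =>
      intro ⟨h1, _⟩
      exact absurd (Nat.le_of_dvd one_pos h1) (not_le.mpr hpp.one_lt)
    | tail hab hbc ih =>
      intro hc
      exact ih (altstep_back hpp hpodd hbc hc)
  apply key _ hmem
  constructor
  · exact dvd_refl p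
  · exact Nat.dvd_sub hpn (dvd_refl p)
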